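/- Let p be a prime, A = W(𝔽̄_p)((h))^∧_p, and let α* ∈ A be the unique root of w(h,α) = (α - p)(α + (-1)^p)^p - (h - p² + (-1)^p)α. With w_i and d_{i,τ} defined as in the power operation formula (w₁ = -h, w_{p+1} = 1, w_i = (-1)^{p(p-i+1)}[C(p,i-1)+(-1)^{p+1}pC(p,i)] otherwise), define ψ(h) = α* + Σ_{i=0}^{p} (α*)^i Σ_{τ=1}^{p} w_{τ+1} d_{i,τ} ∈ A. Then ψ(h) ≡ h^p (mod p) in A. -/

import Mathlib

/-- `w_i = (-1)^{p(p-i+1)} [ C(p,i-1) + (-1)^{p+1} p · C(p,i) ]` (with `C(p,-1) = 0`). -/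
def wCoef (p i : ℕ) : ℤ :=
  (-1) ^ (p * (p + 1 - i)) *
    ((if i = 0 then 0 else (p.choose (i - 1) : ℤ)) + (-1) ^ (p + 1) * p * (p.choose i))

/-- `d_{i,τ} = Σ_{n=0}^{τ-1} (-1)^{τ-n} w₀^n
Σ_{m₁+⋯+m_{τ-n} = τ+i, 1 ≤ m_s ≤ p+1, m_{τ-n} ≥ i+1} w_{m₁} ⋯ w_{m_{τ-n}}`,
where the last-component condition is imposed on the index `s` with `s + 1 = τ - n`. -/
def dCoef {R : Type*} [CommRing R] (p : ℕ) (w : ℕ → R) (i τ : ℕ) : R :=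
  ∑ n ∈ Finset.range τ,
    (-1) ^ (τ - n) * w 0 ^ n *
      ∑ m ∈ (Fintype.piFinset fun _ : Fin (τ - n) => Finset.Icc 1 (p + 1)).filter
          (fun m => (∑ s, m s) = τ + i ∧ ∀ s : Fin (τ - n), (s : ℕ) + 1 = τ - n → i + 1 ≤ m s),
        ∏ s, w (m s)

/-- The Laurent series ring `W(𝔽̄_p)((h))` over the Witt vectors of `𝔽̄_p`. -/
noncomputable abbrev WLaurent (p : ℕ) [Fact p.Prime] :=
  LaurentSeries (WittVector p (AlgebraicClosure (ZMod p)))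

/-- `A = W(𝔽̄_p)((h))^∧_p`, the `p`-completion of `W(𝔽̄_p)((h))`. -/
noncomputable abbrev ACompl (p : ℕ) [Fact p.Prime] :=
  AdicCompletion (Ideal.span {(p : WLaurent p)}) (WLaurent p)

/-- The element `h` of `A`. -/
noncomputable def hElt (p : ℕ) [Fact p.Prime] : ACompl p :=
  algebraMap (WLaurent p) (ACompl p) (HahnSeries.single 1 1)

/-- The coefficients `w_i` as elements of `A`: `w₁ = -h` and otherwise the integer `w_i`
(note `w_{p+1} = 1` already). -/
noncomputable def wElt (p : ℕ) [Fact p.Prime] : ℕ → ACompl p := fun i =>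
  if i = 1 then -hElt p else (wCoef p i : ACompl p)

/-- `α` is a root of `w(h,α) = (α - p)(α + (-1)^p)^p - (h - p² + (-1)^p)α` in `A`. -/
def IsWRoot (p : ℕ) [Fact p.Prime] (α : ACompl p) : Prop :=
  (α - p) * (α + (-1) ^ p) ^ p - (hElt p - p ^ 2 + (-1) ^ p) * α = 0


section Aux

lemma dvd_wCoef {p : ℕ} (hp : p.Prime) {j : ℕ} (hj1 : j ≠ 1) (hjp : j ≠ p + 1) :
    (p : ℤ) ∣ wCoef p j := by
  unfold wCoef
  apply Dvd.dvd.mul_left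
  apply dvd_add
  · rcases eq_or_ne j 0 with rfl | hj0
    · simp
    · rw [if_neg hj0]
      rcases lt_or_ge p (j - 1) with h | h
      · rw [Nat.choose_eq_zero_of_lt h]; exact dvd_zero _
      · have h1 : j - 1 ≠ 0 := by omega
        have h2 : j - 1 < p := by omega
        exact_mod_cast Int.natCast_dvd_natCast.2 (hp.dvd_choose_self h1 h2)
  · exact ⟨(-1) ^ (p + 1) * p.choose j, by ring⟩

lemma wCoef_succ_self (p : ℕ) : wCoef p (p + 1) = 1 := by
  simp [wCoef, Nat.choose_succ_self]

lemma map_dCoef {R S : Type*} [CommRing R] [CommRing S] (f : R →+* S) (p : ℕ) (w : ℕ → R)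
    (i τ : ℕ) : f (dCoef p w i τ) = dCoef p (fun n => f (w n)) i τ := by
  simp [dCoef, map_sum, map_mul, map_pow, map_prod]

lemma dCoef_compute {S : Type*} [CommRing S] {p : ℕ} (hp : 0 < p) (w : ℕ → S) (hw0 : w 0 = 0) :
    dCoef p w 0 p = (-1) ^ p * w 1 ^ p := by
  unfold dCoef
  rw [Finset.sum_eq_single_of_mem 0 (Finset.mem_range.2 hp)]
  · have hset : ((Fintype.piFinset fun _ : Fin (p - 0) => Finset.Icc 1 (p + 1)).filter
        (fun m => (∑ s, m s) = p + 0 ∧ ∀ s : Fin (p - 0), (s : ℕ) + 1 = p - 0 → 0 + 1 ≤ m s)) =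
        {fun _ => 1} := by
      ext m
      simp only [Finset.mem_filter, Fintype.mem_piFinset, Finset.mem_Icc, Finset.mem_singleton,
        Nat.sub_zero, Nat.add_zero]
      constructor
      · rintro ⟨hmem, hsum, -⟩
        have hone : ∀ s ∈ (Finset.univ : Finset (Fin p)), 1 ≤ m s := fun s _ => (hmem s).1
        have hcard : (∑ _s : Fin p, 1) = p := by simp
        have := (Finset.sum_eq_sum_iff_of_le hone).1 (by rw [hcard, hsum])
        funext s
        exact ((this s (Finset.mem_univ s)).symm)
      · rintro rfl
        refine ⟨fun s => ?_, by simp, fun s _ => le_refl 1⟩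
        simp
    rw [hset]
    simp
  · intro n hn hn0
    rw [hw0, zero_pow hn0, mul_zero, zero_mul]

noncomputable def hahnMapRingHom {Γ : Type*} [AddCommMonoid Γ] [LinearOrder Γ] [IsOrderedCancelAddMonoid Γ]
    {R S : Type*} [CommRing R] [CommRing S] (f : R →+* S) :
    HahnSeries Γ R →+* HahnSeries Γ S where
  toFun x := x.map (f : R →+* S)
  map_zero' := by ext; simp
  map_one' := HahnSeries.map_one f.toMonoidWithZeroHom
  map_add' x y := HahnSeries.map_add (f : R →+ S)
  map_mul' x y := HahnSeries.map_mul (f : R →ₙ+* S)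

@[simp] lemma hahnMapRingHom_coeff {Γ : Type*} [AddCommMonoid Γ] [LinearOrder Γ] [IsOrderedCancelAddMonoid Γ]
    {R S : Type*} [CommRing R] [CommRing S] (f : R →+* S) (x : HahnSeries Γ R) (g : Γ) :
    (hahnMapRingHom f x).coeff g = f (x.coeff g) := rfl

lemma hahnMapRingHom_single {Γ : Type*} [AddCommMonoid Γ] [LinearOrder Γ] [IsOrderedCancelAddMonoid Γ]
    {R S : Type*} [CommRing R] [CommRing S] (f : R →+* S) (a : Γ) (r : R) :
    hahnMapRingHom f (HahnSeries.single a r) = HahnSeries.single a (f r) := by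
  ext g
  rw [hahnMapRingHom_coeff]
  rcases eq_or_ne g a with rfl | hg
  · simp
  · simp [HahnSeries.coeff_single_of_ne hg]

lemma constantCoeff_zero_dvd {p : ℕ} [hp : Fact p.Prime] {k : Type*} [CommRing k] [CharP k p]
    [PerfectRing k p] (c : WittVector p k) (h : WittVector.constantCoeff c = 0) :
    (p : WittVector p k) ∣ c := by
  rcases eq_or_ne c 0 with rfl | hc
  · exact dvd_zero _
  obtain ⟨m, b, hb, rfl⟩ := WittVector.exists_eq_pow_p_mul c hc
  cases m with
  | zero => simp [WittVector.constantCoeff_apply] at h; exact absurd h hb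
  | succ s => exact ⟨(p : WittVector p k) ^ s * b, by ring⟩

lemma C_dvd_of_coeff {R : Type*} [CommRing R] (r : R) (x : HahnSeries ℤ R)
    (h : ∀ g : ℤ, r ∣ x.coeff g) : HahnSeries.C r ∣ x := by
  classical
  refine ⟨⟨fun g => if x.coeff g = 0 then 0 else (h g).choose, ?_⟩, ?_⟩
  · apply x.isPWO_support.mono
    intro g hg
    simp only [Function.mem_support] at hg ⊢
    intro h0
    exact hg (if_pos h0)
  · ext g
    rw [HahnSeries.C_mul_eq_smul, HahnSeries.coeff_smul, smul_eq_mul]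
    show x.coeff g = r * (if x.coeff g = 0 then 0 else (h g).choose)
    split_ifs with h0
    · rw [h0, mul_zero]
    · exact (h g).choose_spec

lemma adic_div {R : Type*} [CommRing R] {r : R} (hr : ∀ a b : R, r * a = r * b → a = b)
    (x : AdicCompletion (Ideal.span {r}) R) (hx : x.val 1 = 0) :
    ∃ y : AdicCompletion (Ideal.span {r}) R, x = r • y := by
  have hI : ∀ n : ℕ, (Ideal.span {r} ^ n • ⊤ : Submodule R R) = Ideal.span {r ^ n} := by
    intro n
    rw [smul_eq_mul, Ideal.mul_top, Ideal.span_singleton_pow]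
  obtain ⟨f, hf⟩ := AdicCompletion.mk_surjective (Ideal.span {r}) R x
  rw [← hf] at hx
  have h1 : ∀ n : ℕ, r ∣ (f (n + 1)) := by
    intro n
    have hf1 : (f 1 : R) ∈ (Ideal.span {r} ^ 1 • ⊤ : Submodule R R) :=
      (Submodule.Quotient.mk_eq_zero _).1 hx
    have hdiff : (f 1 : R) - f (n + 1) ∈ (Ideal.span {r} ^ 1 • ⊤ : Submodule R R) :=
      SModEq.sub_mem.1 (f.property (by omega : 1 ≤ n + 1))
    have hmem : (f (n + 1) : R) ∈ (Ideal.span {r} ^ 1 • ⊤ : Submodule R R) := by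
      have := Submodule.sub_mem _ hf1 hdiff
      simpa using this
    rw [hI 1, pow_one] at hmem
    exact Ideal.mem_span_singleton.1 hmem
  choose g hg using h1
  have hcauchy : ∀ n : ℕ, g n ≡ g (n + 1) [SMOD (Ideal.span {r} ^ n • ⊤ : Submodule R R)] := by
    intro n
    have hdiff : (f (n + 1) : R) - f (n + 2) ∈ (Ideal.span {r} ^ (n + 1) • ⊤ : Submodule R R) :=
      SModEq.sub_mem.1 (f.property (by omega : n + 1 ≤ n + 2))
    rw [hI (n + 1)] at hdiff
    obtain ⟨c, hc⟩ := Ideal.mem_span_singleton.1 hdiff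
    have hcalc : r * (g n - g (n + 1)) = r * (r ^ n * c) := by
      calc r * (g n - g (n + 1)) = f (n + 1) - f (n + 2) := by
            rw [mul_sub, ← hg n, ← hg (n + 1)]
        _ = r ^ (n + 1) * c := hc
        _ = r * (r ^ n * c) := by ring
    rw [SModEq.sub_mem, hI n]
    exact Ideal.mem_span_singleton.2 ⟨c, hr _ _ hcalc⟩
  refine ⟨AdicCompletion.mk _ R (AdicCompletion.AdicCauchySequence.mk _ R g hcauchy), ?_⟩
  rw [← hf]
  ext n
  show Submodule.Quotient.mk (f n) = (r • AdicCompletion.mk _ R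
      (AdicCompletion.AdicCauchySequence.mk _ R g hcauchy)).val n
  have hval : (r • AdicCompletion.mk _ R
      (AdicCompletion.AdicCauchySequence.mk _ R g hcauchy)).val n =
      Submodule.Quotient.mk (r • g n) := rfl
  rw [hval, Submodule.Quotient.eq]
  have heq : (f n : R) - r • g n = f n - f (n + 1) := by rw [smul_eq_mul, ← hg n]
  rw [heq]
  exact SModEq.sub_mem.1 (f.property (by omega : n ≤ n + 1))

/-- Evaluation at level 1 as a ring hom. -/
noncomputable def evalOne (p : ℕ) [Fact p.Prime] :
    ACompl p →+* (WLaurent p) ⧸ ((Ideal.span {(p : WLaurent p)}) ^ 1 • ⊤ : Ideal (WLaurent p)) where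
  toFun x := x.val 1
  map_one' := rfl
  map_mul' _ _ := rfl
  map_zero' := rfl
  map_add' _ _ := rfl

set_option maxHeartbeats 1000000 in
set_option synthInstance.maxHeartbeats 400000 in
lemma root_dvd (p : ℕ) [Fact p.Prime] (α : ACompl p) (hα : IsWRoot p α) :
    (p : ACompl p) ∣ α := by
  classical
  set k := AlgebraicClosure (ZMod p) with hk
  haveI hck : CharP k p := charP_of_injective_algebraMap (algebraMap (ZMod p) k).injective p
  haveI : ExpChar k p := ExpChar.prime Fact.out
  haveI : PerfectRing k p := inferInstance
  set K := LaurentSeries k with hK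
  haveI hcK : CharP K p :=
    charP_of_injective_ringHom (HahnSeries.C_injective (R := k) (Γ := ℤ)) p
  let Φ : WLaurent p →+* K := hahnMapRingHom (WittVector.constantCoeff)
  have hΦp : Φ (p : WLaurent p) = 0 := by
    rw [map_natCast]
    exact CharP.cast_eq_zero K p
  have hker : ∀ a : WLaurent p, Φ a = 0 → a ∈ Ideal.span {(p : WLaurent p)} := by
    intro a ha
    have hco : ∀ g : ℤ, (p : WittVector p k) ∣ a.coeff g := by
      intro g
      apply constantCoeff_zero_dvd
      have h0 : (Φ a).coeff g = 0 := by rw [ha]; rfl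
      exact h0
    have hdvd := C_dvd_of_coeff _ a hco
    rw [map_natCast (HahnSeries.C : WittVector p k →+* WLaurent p) p] at hdvd
    exact Ideal.mem_span_singleton.2 hdvd
  have hker' : ∀ a ∈ (Ideal.span {(p : WLaurent p)} ^ 1 • ⊤ : Ideal (WLaurent p)), Φ a = 0 := by
    intro a ha
    rw [smul_eq_mul, Ideal.mul_top, pow_one, Ideal.mem_span_singleton] at ha
    obtain ⟨c, rfl⟩ := ha
    rw [map_mul, hΦp, zero_mul]
  let ψq : (WLaurent p ⧸ (Ideal.span {(p : WLaurent p)} ^ 1 • ⊤ : Ideal (WLaurent p))) →+* K :=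
    Ideal.Quotient.lift _ Φ hker'
  let χ : ACompl p →+* K := ψq.comp (evalOne p)
  have hχh : χ (hElt p) = HahnSeries.single 1 1 := by
    show ψq (evalOne p (hElt p)) = _
    have h1 : evalOne p (hElt p) = (algebraMap (WLaurent p)
        (WLaurent p ⧸ (Ideal.span {(p : WLaurent p)} ^ 1 • ⊤ : Ideal (WLaurent p))) :
        WLaurent p →+* (WLaurent p ⧸ (Ideal.span {(p : WLaurent p)} ^ 1 • ⊤ : Ideal (WLaurent p))))
        (HahnSeries.single 1 1) := rfl
    rw [h1, Ideal.Quotient.algebraMap_eq, Ideal.Quotient.lift_mk]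
    show hahnMapRingHom (WittVector.constantCoeff) (HahnSeries.single 1 1) = _
    rw [hahnMapRingHom_single, map_one]
  have hroot := hα
  unfold IsWRoot at hroot
  have heq := congrArg χ hroot
  simp only [map_sub, map_mul, map_add, map_pow, map_natCast, map_neg, map_one, map_zero] at heq
  rw [hχh] at heq
  have hp0 : ((p : ℕ) : K) = 0 := CharP.cast_eq_zero K p
  haveI : ExpChar K p := ExpChar.prime Fact.out
  have hfrob : (χ α + (-1) ^ p) ^ p = (χ α) ^ p + ((-1 : K) ^ p) := by
    rw [add_pow_char]
    congr 1
    rw [← pow_mul]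
    have hint : ((-1 : ℤ)) ^ (p * p) = (-1 : ℤ) ^ p := by
      rcases (Fact.out : p.Prime).eq_two_or_odd' with h2 | hodd
      · subst h2; norm_num
      · rw [(hodd.mul hodd).neg_one_pow, hodd.neg_one_pow]
    calc (-1 : K) ^ (p * p) = (((-1 : ℤ) ^ (p * p) : ℤ) : K) := by rw [Int.cast_pow, Int.cast_neg, Int.cast_one]
      _ = (((-1 : ℤ) ^ p : ℤ) : K) := by rw [hint]
      _ = (-1 : K) ^ p := by rw [Int.cast_pow, Int.cast_neg, Int.cast_one]
  have hmain : χ α * ((χ α) ^ p - HahnSeries.single 1 1) = 0 := by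
    rw [hfrob, hp0] at heq
    linear_combination heq
  have hz : χ α = 0 := by
    rcases mul_eq_zero.1 hmain with hz | hsing
    · exact hz
    · exfalso
      have hpow : (χ α) ^ p = HahnSeries.single (1 : ℤ) (1 : k) := sub_eq_zero.1 hsing
      have horder := congrArg HahnSeries.order hpow
      rw [HahnSeries.order_pow, HahnSeries.order_single one_ne_zero, nsmul_eq_mul] at horder
      have hdvd : (p : ℤ) ∣ 1 := ⟨(χ α).order, horder.symm⟩
      have hle := Int.le_of_dvd one_pos hdvd
      have h2 : (2 : ℤ) ≤ (p : ℤ) := by exact_mod_cast (Fact.out : p.Prime).two_le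
      omega
  have hval : α.val 1 = 0 := by
    have hψ : ψq (evalOne p α) = 0 := hz
    obtain ⟨a, ha⟩ := Ideal.Quotient.mk_surjective (evalOne p α)
    rw [← ha, Ideal.Quotient.lift_mk] at hψ
    have hmem := hker a hψ
    have h0 : evalOne p α = 0 := by
      rw [← ha, Ideal.Quotient.eq_zero_iff_mem, smul_eq_mul, Ideal.mul_top, pow_one]
      exact hmem
    exact h0
  have hcan : ∀ a b : WLaurent p, (p : WLaurent p) * a = (p : WLaurent p) * b → a = b := by
    have hpR : (p : WLaurent p) ≠ 0 := by
      intro h0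
      apply WittVector.p_nonzero p k
      apply HahnSeries.C_injective (Γ := ℤ)
      calc (HahnSeries.C : WittVector p k →+* WLaurent p) ((p : ℕ) : WittVector p k)
          = ((p : ℕ) : WLaurent p) := map_natCast _ p
        _ = 0 := h0
        _ = HahnSeries.C (0 : WittVector p k) := (map_zero _).symm
    intro a b hab
    exact mul_left_cancel₀ hpR hab
  obtain ⟨y, hy⟩ := adic_div hcan α hval
  refine ⟨y, ?_⟩
  rw [hy, ← map_natCast (algebraMap (WLaurent p) (ACompl p)) p, ← Algebra.smul_def]

end Aux

set_option maxHeartbeats 2000000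
set_option synthInstance.maxHeartbeats 1000000

/-- Frobenius congruence for the total power operation: for the (unique) root `α*` of
`w(h,·)` in `A`, `ψ(h) = α* + Σ_{i=0}^{p} (α*)^i Σ_{τ=1}^{p} w_{τ+1} d_{i,τ} ≡ h^p (mod p)`. -/
theorem stmt15 (p : ℕ) [Fact p.Prime] :
    ∀ α : ACompl p, IsWRoot p α →
      (p : ACompl p) ∣
        (α + ∑ i ∈ Finset.range (p + 1),
            α ^ i * ∑ τ ∈ Finset.Icc 1 p, wElt p (τ + 1) * dCoef p (wElt p) i τ) -
          hElt p ^ p := by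
  intro α hα
  have hdvd := root_dvd p α hα
  have hp' : p.Prime := Fact.out
  rw [← Ideal.mem_span_singleton, ← Ideal.Quotient.eq_zero_iff_mem]
  set f := Ideal.Quotient.mk (Ideal.span {((p : ℕ) : ACompl p)}) with hfdef
  have hfp : f ((p : ℕ) : ACompl p) = 0 := by
    rw [Ideal.Quotient.eq_zero_iff_mem]
    exact Ideal.mem_span_singleton_self _
  have hfα : f α = 0 := by
    obtain ⟨c, rfl⟩ := hdvd
    rw [map_mul, hfp, zero_mul]
  have hfw : ∀ j : ℕ, j ≠ 1 → j ≠ p + 1 → f (wElt p j) = 0 := by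
    intro j hj1 hjp
    obtain ⟨c, hc⟩ := dvd_wCoef hp' hj1 hjp
    have hwj : wElt p j = ((p : ℕ) : ACompl p) * ((c : ℤ) : ACompl p) := by
      simp only [wElt, if_neg hj1, hc]
      push_cast
      ring
    rw [hwj, map_mul, hfp, zero_mul]
  have hfwp1 : f (wElt p (p + 1)) = 1 := by
    have hw : wElt p (p + 1) = ((wCoef p (p + 1) : ℤ) : ACompl p) :=
      if_neg (show p + 1 ≠ 1 by have := hp'.two_le; omega)
    rw [hw, wCoef_succ_self]
    simp
  have hsum : f (∑ i ∈ Finset.range (p + 1),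
      α ^ i * ∑ τ ∈ Finset.Icc 1 p, wElt p (τ + 1) * dCoef p (wElt p) i τ) =
      f (hElt p) ^ p := by
    rw [map_sum, Finset.sum_eq_single_of_mem 0 (Finset.mem_range.2 (by omega))]
    · rw [map_mul, map_pow, pow_zero, one_mul, map_sum,
        Finset.sum_eq_single_of_mem p (Finset.mem_Icc.2 ⟨hp'.one_lt.le, le_refl p⟩)]
      · rw [map_mul, hfwp1, one_mul, map_dCoef,
          dCoef_compute hp'.pos _ (hfw 0 (by omega) (by omega))]
        have hw1 : f (wElt p 1) = -f (hElt p) := by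
          have hw : wElt p 1 = -hElt p := if_pos rfl
          rw [hw, map_neg]
        rw [hw1, ← mul_pow, neg_one_mul, neg_neg]
      · intro τ hτmem hτp
        have h1 : 1 ≤ τ := (Finset.mem_Icc.1 hτmem).1
        rw [map_mul, hfw (τ + 1) (by omega) (by omega), zero_mul]
    · intro i _ hi0
      rw [map_mul, map_pow, hfα, zero_pow hi0, zero_mul]
  rw [map_sub, map_add, map_pow, hfα, hsum, zero_add, sub_self]
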